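/- arXiv:2410.05513 — 2 statements merged into one kernel-verified Lean document; each statement's English description precedes it below -/
import Mathlib

section
/- Let M be a matroid with a collection of flats F₁,…,F_t, each of rank at least 2, covering E(M) with ∑ᵢ (r(Fᵢ) − 1) ≤ k − 1. If Fᵢ and Fⱼ are not skew for some i ≠ j, then replacing the pair Fᵢ, Fⱼ by the single flat cl(Fᵢ ∪ Fⱼ) yields a collection of flats of rank at least 2 covering E(M) whose sum of (rank − 1) is still at most k − 1. Hence every k-degenerate matroid admits such a cover by pairwise skew flats. -/
open Set
open scoped Classical

namespace MatroidPaper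

variable {α : Type*}

/-- The rank of a set in a matroid: the supremum of cardinalities of independent subsets. -/
noncomputable def rkS (M : Matroid α) (X : Set α) : ℕ :=
  sSup {n | ∃ I, M.Indep I ∧ I ⊆ X ∧ I.ncard = n}

/-- The rank of a matroid. -/
noncomputable def rk (M : Matroid α) : ℕ := rkS M M.E

/-- A hyperplane: a flat of rank `rk M - 1`. -/
def Hyp (M : Matroid α) (H : Set α) : Prop := M.IsFlat H ∧ rkS M H = rk M - 1

/-- Two sets are skew if the rank of their union is the sum of their ranks. -/
def SkewSets (M : Matroid α) (X Y : Set α) : Prop :=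
  rkS M (X ∪ Y) = rkS M X + rkS M Y

/-- A simple matroid: every subset of the ground set with at most two elements is independent. -/
def SimpleM (M : Matroid α) : Prop := ∀ X ⊆ M.E, X.ncard ≤ 2 → M.Indep X

/-- A real-representable matroid. -/
def RealRep (M : Matroid α) : Prop :=
  ∃ (n : ℕ) (φ : α → (Fin n → ℝ)), ∀ I, I ⊆ M.E →
    (M.Indep I ↔ LinearIndependent ℝ (fun x : I => φ x))

/-- A matroid is `k`-degenerate if it has rank at most one or its ground set is covered by
flats of rank at least two with `∑ (r(Fᵢ) - 1) ≤ k - 1`. -/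
def Degen (M : Matroid α) (k : ℕ) : Prop :=
  rk M ≤ 1 ∨ ∃ (t : ℕ) (F : Fin t → Set α),
    (∀ i, M.IsFlat (F i) ∧ 2 ≤ rkS M (F i)) ∧
    M.E ⊆ ⋃ i, F i ∧ ∑ i, (rkS M (F i) - 1) ≤ k - 1

/-- A set `X` is `k`-degenerate in `M` if the restriction `M|X` is a `k`-degenerate matroid. -/
def DegenSet (M : Matroid α) (X : Set α) (k : ℕ) : Prop := Degen (M.restrict X) k

/-- `N` is the (one-fold) principal truncation of `F` in `M`. -/
noncomputable def IsPT (M : Matroid α) (F : Set α) (N : Matroid α) : Prop :=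
  N.E = M.E ∧ ∀ X ⊆ M.E,
    rkS N X = if F ⊆ M.closure X then rkS M X - 1 else rkS M X

/-- `N` is the complete principal truncation `M ÷ F` of `F` in `M`. -/
def IsCPT (M : Matroid α) (F : Set α) (N : Matroid α) : Prop :=
  N.E = M.E ∧ ∀ X ⊆ M.E,
    rkS N X = min (rkS M X + (rkS M F - 1)) (rkS M (X ∪ F)) - (rkS M F - 1)

variable {M : Matroid α} {I J X Y : Set α}

lemma closure_flat' (M : Matroid α) (X : Set α) : M.IsFlat (M.closure X) := by
  rw [Matroid.isFlat_iff_isClosed]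
  refine ⟨M.closure_subset_ground X, ?_⟩
  have h := M.closure_eq_subtypeClosure X
  convert M.subtypeClosure.isClosed_closure ⟨X ∩ M.E, inter_subset_right⟩
  exact Subtype.ext h

lemma ncard_le_of_basis' [M.Finite] (hI : M.IsBasis' I X) (hJ : M.Indep J) (hJX : J ⊆ X) :
    J.ncard ≤ I.ncard := by
  obtain ⟨J', hJ', hJJ'⟩ := hJ.subset_isBasis'_of_subset hJX
  have hfin : J'.Finite := hJ'.indep.finite
  have hcard := hI.encard_eq_encard hJ'
  calc J.ncard ≤ J'.ncard := Set.ncard_le_ncard hJJ' hfin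
    _ = I.ncard := by rw [Set.ncard_def, Set.ncard_def, hcard]

lemma rkS_eq_ncard [M.Finite] (hI : M.IsBasis' I X) : rkS M X = I.ncard := by
  have hmem : I.ncard ∈ {n | ∃ J, M.Indep J ∧ J ⊆ X ∧ J.ncard = n} :=
    ⟨I, hI.indep, hI.subset, rfl⟩
  have hub : ∀ n ∈ {n | ∃ J, M.Indep J ∧ J ⊆ X ∧ J.ncard = n}, n ≤ I.ncard := by
    rintro n ⟨J, hJ, hJX, rfl⟩
    exact ncard_le_of_basis' hI hJ hJX
  exact le_antisymm (csSup_le ⟨_, hmem⟩ hub) (le_csSup ⟨I.ncard, hub⟩ hmem)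

lemma rkS_mono [M.Finite] (h : X ⊆ Y) : rkS M X ≤ rkS M Y := by
  obtain ⟨I, hI⟩ := M.exists_isBasis' X
  obtain ⟨J, hJ⟩ := M.exists_isBasis' Y
  rw [rkS_eq_ncard hI, rkS_eq_ncard hJ]
  exact ncard_le_of_basis' hJ hI.indep (hI.subset.trans h)

lemma rkS_closure (M : Matroid α) [M.Finite] (X : Set α) : rkS M (M.closure X) = rkS M X := by
  obtain ⟨I, hI⟩ := M.exists_isBasis' X
  rw [rkS_eq_ncard hI, rkS_eq_ncard hI.isBasis_closure_right.isBasis']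

lemma rkS_union_le [M.Finite] : rkS M (X ∪ Y) ≤ rkS M X + rkS M Y := by
  obtain ⟨I, hI⟩ := M.exists_isBasis' X
  obtain ⟨K, hK, hIK⟩ := hI.indep.subset_isBasis'_of_subset (hI.subset.trans subset_union_left)
  have hKX : K ∩ X ⊆ I := fun x hx =>
    hI.mem_of_insert_indep hx.2 (hK.indep.subset (insert_subset hx.1 hIK))
  have hKY : K \ I ⊆ Y := by
    intro x hx
    rcases hK.subset hx.1 with h | h
    · exact absurd (hKX ⟨hx.1, h⟩) hx.2
    · exact h
  have hY : (K \ I).ncard ≤ rkS M Y := by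
    obtain ⟨J, hJ⟩ := M.exists_isBasis' Y
    rw [rkS_eq_ncard hJ]
    exact ncard_le_of_basis' hJ (hK.indep.subset diff_subset) hKY
  rw [rkS_eq_ncard hK, rkS_eq_ncard hI]
  calc K.ncard ≤ I.ncard + (K \ I).ncard := by
        conv_lhs => rw [← union_diff_cancel hIK]
        exact Set.ncard_union_le _ _
    _ ≤ I.ncard + rkS M Y := Nat.add_le_add_left hY _


lemma merge [M.Finite] {k t : ℕ} (F : Fin t → Set α)
    (h1 : ∀ i, M.IsFlat (F i) ∧ 2 ≤ rkS M (F i))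
    (h2 : M.E ⊆ ⋃ i, F i) (h3 : ∑ i, (rkS M (F i) - 1) ≤ k - 1)
    (i j : Fin t) (hij : i ≠ j) (hns : ¬ SkewSets M (F i) (F j)) :
    M.IsFlat (M.closure (F i ∪ F j)) ∧ 2 ≤ rkS M (M.closure (F i ∪ F j)) ∧
    (M.E ⊆ M.closure (F i ∪ F j) ∪ ⋃ l ∈ ({i, j} : Set (Fin t))ᶜ, F l) ∧
    (rkS M (M.closure (F i ∪ F j)) - 1) +
      ∑ l ∈ Finset.univ \ {i, j}, (rkS M (F l) - 1) ≤ k - 1 := by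
  have hsubE : F i ∪ F j ⊆ M.E := union_subset (h1 i).1.subset_ground (h1 j).1.subset_ground
  have hsubcl : F i ∪ F j ⊆ M.closure (F i ∪ F j) := M.subset_closure _ hsubE
  refine ⟨closure_flat' M _, ?_, ?_, ?_⟩
  · exact le_trans (h1 i).2 (rkS_mono (subset_union_left.trans hsubcl))
  · intro x hx
    obtain ⟨l, hl⟩ := mem_iUnion.mp (h2 hx)
    by_cases hli : l = i
    · exact Or.inl (hsubcl (Or.inl (hli ▸ hl)))
    by_cases hlj : l = j
    · exact Or.inl (hsubcl (Or.inr (hlj ▸ hl)))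
    · exact Or.inr (mem_biUnion (by simp [hli, hlj]) hl)
  · have hcl : rkS M (M.closure (F i ∪ F j)) = rkS M (F i ∪ F j) := rkS_closure M _
    have hle : rkS M (F i ∪ F j) ≤ rkS M (F i) + rkS M (F j) := rkS_union_le
    have hne : rkS M (F i ∪ F j) ≠ rkS M (F i) + rkS M (F j) := hns
    have hsplit : ∑ l ∈ Finset.univ \ {i, j}, (rkS M (F l) - 1) +
        ∑ l ∈ ({i, j} : Finset (Fin t)), (rkS M (F l) - 1) = ∑ l, (rkS M (F l) - 1) :=
      Finset.sum_sdiff (Finset.subset_univ _)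
    rw [Finset.sum_pair hij] at hsplit
    have hi2 := (h1 i).2
    have hj2 := (h1 j).2
    omega

lemma skewify [M.Finite] (k : ℕ) : ∀ (t : ℕ) (F : Fin t → Set α),
    (∀ i, M.IsFlat (F i) ∧ 2 ≤ rkS M (F i)) → M.E ⊆ ⋃ i, F i →
    ∑ i, (rkS M (F i) - 1) ≤ k - 1 →
    ∃ (t' : ℕ) (G : Fin t' → Set α), (∀ i, M.IsFlat (G i) ∧ 2 ≤ rkS M (G i)) ∧
      M.E ⊆ ⋃ i, G i ∧ ∑ i, (rkS M (G i) - 1) ≤ k - 1 ∧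
      ∀ i j : Fin t', i ≠ j → SkewSets M (G i) (G j) := by
  intro t
  induction t using Nat.strong_induction_on with
  | _ t IH =>
    intro F h1 h2 h3
    by_cases hsk : ∀ i j : Fin t, i ≠ j → SkewSets M (F i) (F j)
    · exact ⟨t, F, h1, h2, h3, hsk⟩
    push_neg at hsk
    obtain ⟨i, j, hij, hns⟩ := hsk
    obtain ⟨hfl, hr2, hcov, hsum⟩ := merge F h1 h2 h3 i j hij hns
    set s : Finset (Fin t) := Finset.univ \ {i, j} with hs
    have ht2 : 2 ≤ t := by
      have h1' : (i : ℕ) ≠ (j : ℕ) := fun h => hij (Fin.ext h)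
      have := i.isLt; have := j.isLt; omega
    have hscard : s.card = t - 2 := by
      rw [hs, Finset.card_sdiff_of_subset (Finset.subset_univ _), Finset.card_pair hij,
        Finset.card_univ, Fintype.card_fin]
    have hlt : s.card + 1 < t := by omega
    set e := s.equivFin with he
    set G : Fin (s.card + 1) → Set α :=
      Fin.cons (M.closure (F i ∪ F j)) (fun m : Fin s.card => F (e.symm m)) with hG
    have hG1 : ∀ m, M.IsFlat (G m) ∧ 2 ≤ rkS M (G m) := by
      intro m
      refine Fin.cases ?_ ?_ m
      · simpa [hG] using And.intro hfl hr2
      · intro m'; simpa [hG] using h1 _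
    have hG2 : M.E ⊆ ⋃ m, G m := by
      intro x hx
      rcases hcov hx with hx' | hx'
      · exact mem_iUnion.mpr ⟨0, by simpa [hG] using hx'⟩
      · simp only [mem_iUnion, exists_prop, mem_compl_iff, mem_insert_iff,
          mem_singleton_iff] at hx'
        obtain ⟨l, hl, hxl⟩ := hx'
        push_neg at hl
        have hls : l ∈ s := by simp [hs, hl.1, hl.2]
        refine mem_iUnion.mpr ⟨(e ⟨l, hls⟩).succ, ?_⟩
        simpa [hG] using hxl
    have hG3 : ∑ m, (rkS M (G m) - 1) ≤ k - 1 := by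
      have hsum' : ∑ m, (rkS M (G m) - 1) =
          (rkS M (M.closure (F i ∪ F j)) - 1) +
            ∑ m : Fin s.card, (rkS M (F (e.symm m)) - 1) := by
        rw [Fin.sum_univ_succ]
        simp [hG]
      have heq : ∑ m : Fin s.card, (rkS M (F (e.symm m)) - 1) =
          ∑ l ∈ s, (rkS M (F l) - 1) := by
        rw [← Finset.sum_coe_sort s (fun l => rkS M (F l) - 1)]
        exact Fintype.sum_equiv e.symm _ _ (fun m => rfl)
      rw [hsum', heq]
      exact hsum
    exact IH (s.card + 1) hlt G hG1 hG2 hG3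


/-- Merging a non-skew pair of covering flats keeps a valid cover; hence every `k`-degenerate
matroid admits a cover by pairwise-skew flats. -/
theorem stmt3 (M : Matroid α) [M.Finite] (k : ℕ) :
    (∀ (t : ℕ) (F : Fin t → Set α),
      (∀ i, M.IsFlat (F i) ∧ 2 ≤ rkS M (F i)) →
      M.E ⊆ ⋃ i, F i → ∑ i, (rkS M (F i) - 1) ≤ k - 1 →
      ∀ i j : Fin t, i ≠ j → ¬ SkewSets M (F i) (F j) →
        (M.IsFlat (M.closure (F i ∪ F j)) ∧ 2 ≤ rkS M (M.closure (F i ∪ F j)) ∧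
        (M.E ⊆ M.closure (F i ∪ F j) ∪ ⋃ l ∈ ({i, j} : Set (Fin t))ᶜ, F l) ∧
        (rkS M (M.closure (F i ∪ F j)) - 1) +
          ∑ l ∈ Finset.univ \ {i, j}, (rkS M (F l) - 1) ≤ k - 1)) ∧
    (Degen M k → rk M ≤ 1 ∨ ∃ (t : ℕ) (F : Fin t → Set α),
      (∀ i, M.IsFlat (F i) ∧ 2 ≤ rkS M (F i)) ∧
      M.E ⊆ ⋃ i, F i ∧ ∑ i, (rkS M (F i) - 1) ≤ k - 1 ∧
      ∀ i j : Fin t, i ≠ j → SkewSets M (F i) (F j)) := by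
  constructor
  · intro t F h1 h2 h3 i j hij hns
    exact merge F h1 h2 h3 i j hij hns
  · rintro (h | ⟨t, F, h1, h2, h3⟩)
    · exact Or.inl h
    · exact Or.inr (skewify k t F h1 h2 h3)

end MatroidPaper
end

section
/- For k ≥ 3 and t ≥ 3, b_k(t) ≥ (k−1)·t; that is, there exists a simple rank-(k+1) real-representable matroid M with a 2-colouring (R,B), |R| = t, |B| = (k−1)t, such that r(B) ≥ 2, every hyperplane of M contains a red point, and for every line of M|B there is a rank-(k−1) flat skew to it containing no red point. -/
open Set
open scoped Classical

namespace MatroidPaper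

variable {α : Type*}

set_option linter.unusedSectionVars false
set_option linter.unusedVariables false
set_option maxHeartbeats 1000000

open Submodule Module

section Generic
variable {V : Type*} [AddCommGroup V] [Module ℝ V] [FiniteDimensional ℝ V]

def FamInd (φ : α → V) (I : Set α) : Prop := LinearIndependent ℝ (fun x : I => φ x)

lemma FamInd.injOn {φ : α → V} {I : Set α} (h : FamInd φ I) : Set.InjOn φ I := by
  intro x hx y hy hxy
  exact congrArg Subtype.val (h.injective (a₁ := ⟨x, hx⟩) (a₂ := ⟨y, hy⟩) hxy)

lemma FamInd.mono {φ : α → V} {I J : Set α} (h : FamInd φ J) (hIJ : I ⊆ J) : FamInd φ I :=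
  h.comp (Set.inclusion hIJ) (Set.inclusion_injective hIJ)

lemma famInd_empty (φ : α → V) : FamInd φ (∅ : Set α) := linearIndependent_empty_type

lemma famInd_singleton {φ : α → V} {a : α} (h : φ a ≠ 0) : FamInd φ {a} :=
  show LinearIndepOn ℝ φ {a} from (linearIndepOn_singleton_iff ℝ).2 h

lemma FamInd.image {φ : α → V} {I : Set α} (h : FamInd φ I) :
    LinearIndependent ℝ ((↑) : (φ '' I) → V) :=
  show LinearIndepOn ℝ id (φ '' I) from (linearIndepOn_iff_image h.injOn).1 h

lemma FamInd.ncard_eq {φ : α → V} {I : Set α} (hfin : I.Finite) (h : FamInd φ I) :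
    I.ncard = Module.finrank ℝ (span ℝ (φ '' I)) := by
  have hfi : (φ '' I).Finite := hfin.image φ
  have : Fintype (φ '' I) := hfi.fintype
  rw [← Set.ncard_image_of_injOn h.injOn, Set.ncard_eq_toFinset_card',
    finrank_span_set_eq_card h.image]

lemma famInd_insert_iff {φ : α → V} {I : Set α} {a : α} (h : FamInd φ I) (ha : a ∉ I) :
    FamInd φ (insert a I) ↔ φ a ∉ span ℝ (φ '' I) := by
  show LinearIndepOn ℝ φ (insert a I) ↔ _; rw [linearIndepOn_insert ha]
  exact ⟨fun h' => h'.2, fun h' => ⟨h, h'⟩⟩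

/-- The matroid of a function into a vector space. -/
noncomputable def matroidOfFun (φ : α → V) (E : Set α) (hfin : E.Finite) : Matroid α :=
  (IndepMatroid.ofFinite hfin (fun I => I ⊆ E ∧ FamInd φ I)
    ⟨empty_subset _, famInd_empty φ⟩
    (fun I J hJ hIJ => ⟨hIJ.trans hJ.1, hJ.2.mono hIJ⟩)
    (by
      intro I J hI hJ hlt
      have hIfin : I.Finite := hfin.subset hI.1
      have hJfin : J.Finite := hfin.subset hJ.1
      by_contra hcon
      push_neg at hcon
      have hsub : φ '' J ⊆ span ℝ (φ '' I) := by
        rintro _ ⟨e, he, rfl⟩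
        by_cases heI : e ∈ I
        · exact subset_span (mem_image_of_mem _ heI)
        by_contra hsp
        exact hcon e he heI (insert_subset (hJ.1 he) hI.1)
          ((famInd_insert_iff hI.2 heI).2 hsp)
      have hle : span ℝ (φ '' J) ≤ span ℝ (φ '' I) := span_le.2 hsub
      have := Submodule.finrank_mono hle
      rw [← hI.2.ncard_eq hIfin, ← hJ.2.ncard_eq hJfin] at this
      omega)
    (fun I hI => hI.1)).matroid

@[simp] lemma matroidOfFun_E (φ : α → V) (E : Set α) (hfin : E.Finite) :
    (matroidOfFun φ E hfin).E = E := rfl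

@[simp] lemma matroidOfFun_indep_iff (φ : α → V) (E : Set α) (hfin : E.Finite) {I : Set α} :
    (matroidOfFun φ E hfin).Indep I ↔ I ⊆ E ∧ FamInd φ I := by
  simp [matroidOfFun]

section MatroidLemmas
variable {M : Matroid α} {φ : α → V} {E : Set α}
  (hME : M.E = E) (hfin : E.Finite)
  (hInd : ∀ I, M.Indep I ↔ I ⊆ E ∧ FamInd φ I)

include hME hfin hInd

lemma basis_span_eq {I X : Set α} (hXE : X ⊆ E) (hB : M.IsBasis I X) :
    span ℝ (φ '' I) = span ℝ (φ '' X) := by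
  refine le_antisymm (span_mono (image_mono hB.subset)) (span_le.2 ?_)
  rintro _ ⟨e, he, rfl⟩
  by_cases heI : e ∈ I
  · exact subset_span (mem_image_of_mem _ heI)
  have hni : ¬ M.Indep (insert e I) := fun h => heI (hB.mem_of_insert_indep he h)
  rw [hInd] at hni
  push_neg at hni
  have hIE : I ⊆ E := hB.subset.trans hXE
  have := hni (insert_subset (hXE he) hIE)
  have hIind : FamInd φ I := ((hInd I).1 hB.indep).2
  by_contra hsp
  exact this ((famInd_insert_iff hIind heI).2 hsp)

lemma exists_nice_basis (X : Set α) :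
    ∃ I, M.Indep I ∧ I ⊆ X ∩ E ∧
      I.ncard = Module.finrank ℝ (span ℝ (φ '' (X ∩ E))) ∧
      span ℝ (φ '' I) = span ℝ (φ '' (X ∩ E)) := by
  obtain ⟨I, hB⟩ := M.exists_isBasis (X ∩ E) (by rw [hME]; exact inter_subset_right)
  have hsp := basis_span_eq hME hfin hInd inter_subset_right hB
  have hIfin : I.Finite := hfin.subset (hB.subset.trans inter_subset_right)
  refine ⟨I, hB.indep, hB.subset, ?_, hsp⟩
  rw [((hInd I).1 hB.indep).2.ncard_eq hIfin, hsp]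

lemma rkS_eq (X : Set α) :
    rkS M X = Module.finrank ℝ (span ℝ (φ '' (X ∩ E))) := by
  obtain ⟨I, hI, hIX, hcard, -⟩ := exists_nice_basis hME hfin hInd X
  refine IsGreatest.csSup_eq ⟨⟨I, hI, hIX.trans inter_subset_left, hcard⟩, ?_⟩
  rintro n ⟨J, hJ, hJX, rfl⟩
  have hJE : J ⊆ E := ((hInd J).1 hJ).1
  have hJfin : J.Finite := hfin.subset hJE
  rw [((hInd J).1 hJ).2.ncard_eq hJfin]
  exact Submodule.finrank_mono (span_mono (image_mono (subset_inter hJX hJE)))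

lemma flat_of_subspace (W : Submodule ℝ V) : M.IsFlat {e ∈ E | φ e ∈ W} := by
  constructor
  · intro I X hIF hIX x hx
    have hxE : x ∈ E := by rw [← hME]; exact hIX.subset_ground hx
    have hIF' : I ⊆ {e ∈ E | φ e ∈ W} := hIF.subset
    by_cases hxI : x ∈ I
    · exact hIF' hxI
    have hni : ¬ M.Indep (insert x I) := fun h => hxI (hIX.mem_of_insert_indep hx h)
    rw [hInd] at hni
    push_neg at hni
    have hIE : I ⊆ E := fun y hy => (hIF' hy).1
    have hIind : FamInd φ I := ((hInd I).1 hIX.indep).2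
    have hsp : φ x ∈ span ℝ (φ '' I) := by
      by_contra hsp
      exact hni (insert_subset hxE hIE) ((famInd_insert_iff hIind hxI).2 hsp)
    have : span ℝ (φ '' I) ≤ W := span_le.2 (by rintro _ ⟨e, he, rfl⟩; exact (hIF' he).2)
    exact ⟨hxE, this hsp⟩
  · rw [hME]; exact sep_subset _ _

lemma mem_flat_of_span {F : Set α} (hF : M.IsFlat F) {e : α} (he : e ∈ E)
    (hsp : φ e ∈ span ℝ (φ '' F)) : e ∈ F := by
  have hFE : F ⊆ E := by rw [← hME]; exact hF.subset_ground
  obtain ⟨I, hB⟩ := M.exists_isBasis F (by rw [hME]; exact hFE)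
  have hspI : φ e ∈ span ℝ (φ '' I) := by
    rw [basis_span_eq hME hfin hInd hFE hB]; exact hsp
  by_cases heI : e ∈ I
  · exact hB.subset heI
  have hIE : I ⊆ E := hB.subset.trans hFE
  have hIind : FamInd φ I := ((hInd I).1 hB.indep).2
  have hdep : ¬ M.Indep (insert e I) := by
    rw [hInd]
    rintro ⟨-, h2⟩
    exact ((famInd_insert_iff hIind heI).1 h2) hspI
  have hBX : M.IsBasis I (insert e F) := by
    refine hB.indep.isBasis_of_forall_insert (hB.subset.trans (subset_insert _ _)) ?_
    rintro f ⟨hf, hfI⟩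
    rcases hf with rfl | hfF
    · exact ⟨hdep, insert_subset (by rw [hME]; exact he) (by rw [hME]; exact hIE)⟩
    · refine ⟨fun h => hfI (hB.mem_of_insert_indep hfF h),
        insert_subset (by rw [hME]; exact hFE hfF) (by rw [hME]; exact hIE)⟩
  exact hF.subset_of_isBasis_of_isBasis hB hBX (mem_insert _ _)

end MatroidLemmas
end Generic

def pvx (i : ℕ) : ℝ := if i = 0 then 0 else i
def pvy (i : ℕ) : ℝ := if i = 0 then 1 else 0
def dvx (n : ℕ) : ℝ := if n = 0 then 1 else n
def dvy (n : ℕ) : ℝ := if n = 0 then 0 else -1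

def phiB (k j i : ℕ) : Fin (k+1) → ℝ := fun c =>
  if (c:ℕ) = 0 then pvx i else if (c:ℕ) = 1 then pvy i else if (c:ℕ) = j + 2 then 1 else 0
def phiR (k n : ℕ) : Fin (k+1) → ℝ := fun c =>
  if (c:ℕ) = 0 then dvx n else if (c:ℕ) = 1 then dvy n else 0
def phi (k t n : ℕ) : Fin (k+1) → ℝ :=
  if n < t then phiR k n else phiB k ((n-t)/t) ((n-t)%t)

lemma phiR_0 {k n : ℕ} {h} : phiR k n ⟨0, h⟩ = dvx n := by simp [phiR]
lemma phiR_1 {k n : ℕ} {h} : phiR k n ⟨1, h⟩ = dvy n := by simp [phiR]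
lemma phiR_z {k n j : ℕ} {h} : phiR k n ⟨j + 2, h⟩ = 0 := by simp [phiR]
lemma phiB_0 {k j i : ℕ} {h} : phiB k j i ⟨0, h⟩ = pvx i := by simp [phiB]
lemma phiB_1 {k j i : ℕ} {h} : phiB k j i ⟨1, h⟩ = pvy i := by simp [phiB]
lemma phiB_z {k j i j' : ℕ} {h} : phiB k j i ⟨j' + 2, h⟩ = if j' = j then 1 else 0 := by
  simp only [phiB]
  have h0 : ¬ (j' + 2 = 0) := by omega
  have h1 : ¬ (j' + 2 = 1) := by omega
  rw [if_neg h0, if_neg h1]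
  by_cases hj : j' = j
  · rw [if_pos (by omega), if_pos hj]
  · rw [if_neg (by omega), if_neg hj]

lemma phi_red {k t n : ℕ} (h : n < t) : phi k t n = phiR k n := by simp [phi, h]

lemma phi_blue' {k t n : ℕ} (h : ¬ n < t) : phi k t n = phiB k ((n-t)/t) ((n-t)%t) := by
  simp [phi, h]

lemma phi_blue {k t j i : ℕ} (hi : i < t) (ht : 0 < t) :
    phi k t (t + j * t + i) = phiB k j i := by
  have h1 : ¬ (t + j * t + i < t) := by omega
  have h2 : t + j * t + i - t = i + j * t := by omega
  rw [phi, if_neg h1, h2]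
  rw [Nat.add_mul_div_right _ _ ht, Nat.add_mul_mod_self_right,
    Nat.div_eq_of_lt hi, Nat.mod_eq_of_lt hi, Nat.zero_add]

lemma blue_encode_decode {t n : ℕ} (ht : 0 < t) (h1 : t ≤ n) :
    t + ((n - t) / t) * t + ((n - t) % t) = n := by
  have h2 := Nat.div_add_mod (n - t) t
  have : t * ((n - t) / t) = ((n - t) / t) * t := Nat.mul_comm _ _
  omega

lemma blue_lt {t m n : ℕ} (ht : 0 < t) (h1 : t ≤ n) (h2 : n < t + m * t) :
    (n - t) / t < m ∧ (n - t) % t < t := by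
  have hmt : m * t = t * m := Nat.mul_comm m t
  refine ⟨Nat.div_lt_of_lt_mul (by omega), Nat.mod_lt _ ht⟩

lemma phi_ne_zero {k t : ℕ} (hk : 3 ≤ k) (ht : 3 ≤ t) {a : ℕ}
    (ha : a < t + (k-1)*t) : phi k t a ≠ 0 := by
  intro h0
  by_cases hat : a < t
  · rw [phi_red hat] at h0
    by_cases ha0 : a = 0
    · have := congrFun h0 ⟨0, by omega⟩
      rw [phiR_0] at this
      simp [dvx, ha0] at this
    · have := congrFun h0 ⟨1, by omega⟩
      rw [phiR_1] at this
      simp [dvy, ha0] at this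
  · obtain ⟨hj, hi⟩ := blue_lt (by omega) (by omega) ha (m := k - 1)
    rw [phi_blue' hat] at h0
    have := congrFun h0 ⟨(a - t) / t + 2, by omega⟩
    rw [phiB_z, if_pos rfl] at this
    simpa using this

lemma no_parallel {k t : ℕ} (hk : 3 ≤ k) (ht : 3 ≤ t) {a b : ℕ}
    (ha : a < t + (k-1)*t) (hb : b < t + (k-1)*t) (hab : a ≠ b) (r : ℝ)
    (heq : r • phi k t b = phi k t a) : False := by
  by_cases hat : a < t <;> by_cases hbt : b < t
  · -- both red
    have e0 := congrFun heq ⟨0, by omega⟩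
    have e1 := congrFun heq ⟨1, by omega⟩
    simp only [Pi.smul_apply, phi_red hat, phi_red hbt, phiR_0, phiR_1, smul_eq_mul] at e0 e1
    by_cases ha0 : a = 0 <;> by_cases hb0 : b = 0
    · exact hab (ha0.trans hb0.symm)
    · simp only [dvx, dvy, ha0, hb0, if_true, if_false, if_pos, if_neg, reduceIte] at e0 e1
      have hr : r = 0 := by linarith
      rw [hr, zero_mul] at e0
      exact one_ne_zero e0.symm
    · simp only [dvx, dvy, ha0, hb0, reduceIte] at e0 e1
      simp at e1
    · simp only [dvx, dvy, ha0, hb0, reduceIte] at e0 e1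
      have hr : r = 1 := by linarith
      rw [hr, one_mul] at e0
      exact hab (Nat.cast_inj.mp e0).symm
  · -- a red, b blue
    obtain ⟨hjb, hib⟩ := blue_lt (t := t) (by omega) (by omega) hb (m := k - 1)
    have ez := congrFun heq ⟨(b - t) / t + 2, by omega⟩
    rw [Pi.smul_apply, phi_red hat, phi_blue' hbt, phiB_z, phiR_z] at ez
    simp only [reduceIte, smul_eq_mul, mul_one] at ez
    rw [ez, zero_smul] at heq
    exact phi_ne_zero hk ht ha heq.symm
  · -- a blue, b red
    obtain ⟨hja, hia⟩ := blue_lt (t := t) (by omega) (by omega) ha (m := k - 1)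
    have ez := congrFun heq ⟨(a - t) / t + 2, by omega⟩
    rw [Pi.smul_apply, phi_red hbt, phi_blue' hat, phiB_z, phiR_z] at ez
    simp only [reduceIte, smul_eq_mul, mul_zero] at ez
    exact one_ne_zero ez.symm
  · -- both blue
    obtain ⟨hja, hia⟩ := blue_lt (t := t) (by omega) (by omega) ha (m := k - 1)
    obtain ⟨hjb, hib⟩ := blue_lt (t := t) (by omega) (by omega) hb (m := k - 1)
    rw [phi_blue' hat, phi_blue' hbt] at heq
    have ez := congrFun heq ⟨(a - t) / t + 2, by omega⟩
    rw [Pi.smul_apply, phiB_z, phiB_z] at ez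
    by_cases hjj : (a - t) / t = (b - t) / t
    · simp only [hjj, reduceIte, smul_eq_mul, mul_one] at ez
      have hii : (a - t) % t ≠ (b - t) % t := by
        intro hii
        apply hab
        have h1 := blue_encode_decode (t := t) (by omega) (by omega) (n := a)
        have h2 := blue_encode_decode (t := t) (by omega) (by omega) (n := b)
        rw [← h1, ← h2, hjj, hii]
      have e0 := congrFun heq ⟨0, by omega⟩
      have e1 := congrFun heq ⟨1, by omega⟩
      rw [Pi.smul_apply, phiB_0, phiB_0, smul_eq_mul, ez, one_mul] at e0
      rw [Pi.smul_apply, phiB_1, phiB_1, smul_eq_mul, ez, one_mul] at e1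
      by_cases hia0 : (a - t) % t = 0 <;> by_cases hib0 : (b - t) % t = 0
      · exact hii (hia0.trans hib0.symm)
      · simp [pvy, hia0, hib0] at e1
      · simp [pvy, hia0, hib0] at e1
      · simp only [pvx, hia0, hib0, reduceIte] at e0
        exact hii (Nat.cast_inj.mp e0).symm
    · simp only [hjj, reduceIte, smul_eq_mul, mul_zero] at ez
      simp at ez



lemma famInd_pair {k t : ℕ} (hk : 3 ≤ k) (ht : 3 ≤ t) {a b : ℕ} (ha : a < t + (k-1)*t)
    (hb : b < t + (k-1)*t) (hab : a ≠ b) : FamInd (phi k t) {a, b} := by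
  have hnotmem : a ∉ ({b} : Set ℕ) := by simp [hab]
  refine (linearIndepOn_insert hnotmem).2
    ⟨famInd_singleton (phi_ne_zero hk ht hb), ?_⟩
  rw [Set.image_singleton]
  intro hsp
  obtain ⟨r, hr⟩ := Submodule.mem_span_singleton.mp hsp
  exact no_parallel hk ht ha hb hab r hr

lemma planar_choice {t : ℕ} (ht : 3 ≤ t) {ix iy : ℕ} (hix : ix < t) (hiy : iy < t)
    (same : Prop) (hne : same → ix ≠ iy) :
    ∃ sx sy : ℕ, sx < t ∧ sy < t ∧ (same → sx = sy) ∧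
      ∀ a b : ℝ, a * pvx ix + b * pvx iy = a * pvx sx + b * pvx sy →
        a * pvy ix + b * pvy iy = a * pvy sx + b * pvy sy → a = 0 ∧ b = 0 := by
  classical
  by_cases hsame : same
  · have hxy := hne hsame
    by_cases hx0 : ix = 0
    · -- iy ≠ 0, s = if iy = 1 then 2 else 1
      refine ⟨if iy = 1 then 2 else 1, if iy = 1 then 2 else 1, by split <;> omega,
        by split <;> omega, fun _ => rfl, ?_⟩
      intro a b h1 h2
      have hy0 : iy ≠ 0 := by omega
      by_cases hy1 : iy = 1
      · simp only [hx0, hy0, hy1, pvx, pvy, if_true, if_false, reduceIte] at h1 h2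
        norm_num at h1 h2
        constructor <;> linarith
      · simp only [hx0, hy0, hy1, pvx, pvy, reduceIte] at h1 h2
        norm_num at h1 h2
        -- h1 : b * iy = a + b ;  h2 : a = 0
        have hb : b * ((iy:ℝ) - 1) = 0 := by linarith
        have hyge : (2:ℝ) ≤ (iy:ℝ) := by exact_mod_cast (by omega : 2 ≤ iy)
        have : b = 0 := by
          rcases mul_eq_zero.mp hb with h | h
          · exact h
          · linarith
        exact ⟨h2, this⟩
    · by_cases hy0 : iy = 0
      · refine ⟨if ix = 1 then 2 else 1, if ix = 1 then 2 else 1, by split <;> omega,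
          by split <;> omega, fun _ => rfl, ?_⟩
        intro a b h1 h2
        by_cases hx1 : ix = 1
        · simp only [hx0, hy0, hx1, pvx, pvy, reduceIte] at h1 h2
          norm_num at h1 h2
          constructor <;> linarith
        · simp only [hx0, hy0, hx1, pvx, pvy, reduceIte] at h1 h2
          norm_num at h1 h2
          -- h1 : a * ix = a + b ; h2 : b = 0
          have hxge : (2:ℝ) ≤ (ix:ℝ) := by exact_mod_cast (by omega : 2 ≤ ix)
          have ha : a * ((ix:ℝ) - 1) = 0 := by linarith
          have : a = 0 := by
            rcases mul_eq_zero.mp ha with h | h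
            · exact h
            · linarith
          exact ⟨this, h2⟩
      · refine ⟨0, 0, by omega, by omega, fun _ => rfl, ?_⟩
        intro a b h1 h2
        simp only [hx0, hy0, pvx, pvy, reduceIte] at h1 h2
        norm_num at h1 h2
        -- h1 : a * ix + b * iy = 0 ; h2 : 0 = a + b
        have hxyne : (ix:ℝ) ≠ (iy:ℝ) := by
          intro h; exact hxy (Nat.cast_inj.mp h)
        have ha : a * ((ix:ℝ) - (iy:ℝ)) = 0 := by linear_combination h1 + (iy:ℝ) * h2
        have ha0 : a = 0 := by
          rcases mul_eq_zero.mp ha with h | h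
          · exact h
          · exact absurd (by linarith : (ix:ℝ) = iy) hxyne
        exact ⟨ha0, by linarith⟩
  · -- different copies; no constraint sx = sy
    by_cases hx0 : ix = 0 <;> by_cases hy0 : iy = 0
    · refine ⟨1, 2, by omega, by omega, fun h => absurd h hsame, ?_⟩
      intro a b h1 h2
      simp only [hx0, hy0, pvx, pvy, reduceIte] at h1 h2
      norm_num at h1 h2
      constructor <;> linarith
    · refine ⟨1, if iy = 1 then 2 else 0, by omega, by split <;> omega,
        fun h => absurd h hsame, ?_⟩
      intro a b h1 h2
      by_cases hy1 : iy = 1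
      · simp only [hx0, hy0, hy1, pvx, pvy, reduceIte] at h1 h2
        norm_num at h1 h2
        constructor <;> linarith
      · simp only [hx0, hy0, hy1, pvx, pvy, reduceIte] at h1 h2
        norm_num at h1 h2
        -- h1 : b * iy = a ; h2 : a = b
        have hyge : (2:ℝ) ≤ (iy:ℝ) := by exact_mod_cast (by omega : 2 ≤ iy)
        have hb : b * ((iy:ℝ) - 1) = 0 := by linarith
        have hb0 : b = 0 := by
          rcases mul_eq_zero.mp hb with h | h
          · exact h
          · linarith
        exact ⟨by linarith, hb0⟩
    · refine ⟨if ix = 1 then 2 else 0, 1, by split <;> omega, by omega,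
        fun h => absurd h hsame, ?_⟩
      intro a b h1 h2
      by_cases hx1 : ix = 1
      · simp only [hx0, hy0, hx1, pvx, pvy, reduceIte] at h1 h2
        norm_num at h1 h2
        constructor <;> linarith
      · simp only [hx0, hy0, hx1, pvx, pvy, reduceIte] at h1 h2
        norm_num at h1 h2
        -- h1 : a * ix = b ; h2 : b = a
        have hxge : (2:ℝ) ≤ (ix:ℝ) := by exact_mod_cast (by omega : 2 ≤ ix)
        have ha : a * ((ix:ℝ) - 1) = 0 := by linarith
        have ha0 : a = 0 := by
          rcases mul_eq_zero.mp ha with h | h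
          · exact h
          · linarith
        exact ⟨ha0, by linarith⟩
    · refine ⟨0, if iy = 1 then 2 else 1, by omega, by split <;> omega,
        fun h => absurd h hsame, ?_⟩
      intro a b h1 h2
      by_cases hy1 : iy = 1
      · simp only [hx0, hy0, hy1, pvx, pvy, reduceIte] at h1 h2
        norm_num at h1 h2
        -- h1 : a * ix + b = 2 * b ; h2 : 0 = a
        constructor <;> nlinarith [h1, h2]
      · simp only [hx0, hy0, hy1, pvx, pvy, reduceIte] at h1 h2
        norm_num at h1 h2
        -- h1 : a * ix + b * iy = b ; h2 : 0 = a
        have hyne : (iy:ℝ) - 1 ≠ 0 := by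
          have : (2:ℝ) ≤ (iy:ℝ) := by exact_mod_cast (by omega : 2 ≤ iy)
          linarith
        have hb : b * ((iy:ℝ) - 1) = 0 := by nlinarith [h1, h2]
        have hb0 : b = 0 := by
          rcases mul_eq_zero.mp hb with h | h
          · exact h
          · exact absurd h hyne
        exact ⟨by linarith, hb0⟩

lemma single0_eq {k : ℕ} {h0 : 0 < k + 1} :
    Pi.single (⟨0, h0⟩ : Fin (k+1)) (1:ℝ) = phiR k 0 := by
  funext c
  obtain ⟨cv, hcv⟩ := c
  rw [Pi.single_apply]
  simp only [phiR, dvx, dvy, Fin.mk.injEq, reduceIte]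
  split_ifs <;> simp_all

lemma single1_eq {k : ℕ} {h1 : 1 < k + 1} :
    Pi.single (⟨1, h1⟩ : Fin (k+1)) (1:ℝ) = phiR k 0 - phiR k 1 := by
  funext c
  obtain ⟨cv, hcv⟩ := c
  rw [Pi.sub_apply, Pi.single_apply]
  simp only [phiR, dvx, dvy, Fin.mk.injEq, reduceIte]
  split_ifs <;> simp_all

lemma singlez_eq {k j : ℕ} {hz : j + 2 < k + 1} :
    Pi.single (⟨j + 2, hz⟩ : Fin (k+1)) (1:ℝ) = phiB k j 0 - (phiR k 0 - phiR k 1) := by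
  funext c
  obtain ⟨cv, hcv⟩ := c
  rw [Pi.sub_apply, Pi.sub_apply, Pi.single_apply]
  simp only [phiB, phiR, dvx, dvy, pvx, pvy, Fin.mk.injEq, reduceIte]
  split_ifs <;> simp_all <;> omega

lemma sum_apply_z {k : ℕ} (q : Fin (k-1) → ℝ) (w : ℕ → ℕ) {j0 : ℕ} (hj0 : j0 < k - 1)
    {h2 : j0 + 2 < k + 1} :
    (∑ j : Fin (k-1), q j • phiB k (j:ℕ) (w (j:ℕ))) ⟨j0 + 2, h2⟩ = q ⟨j0, hj0⟩ := by
  rw [Finset.sum_apply]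
  simp only [Pi.smul_apply, phiB_z, smul_eq_mul]
  have hc : ∀ j : Fin (k-1), q j * (if j0 = (j:ℕ) then 1 else 0) =
      if j = ⟨j0, hj0⟩ then q j else 0 := by
    intro j
    by_cases hj : j = ⟨j0, hj0⟩
    · subst hj; simp
    · rw [if_neg (fun h => hj (Fin.ext h.symm)), if_neg hj, mul_zero]
  rw [Finset.sum_congr rfl (fun j _ => hc j), Finset.sum_ite_eq' _ _ q]
  simp

lemma sum_apply_0 {k : ℕ} (q : Fin (k-1) → ℝ) (w : ℕ → ℕ) {h0 : 0 < k + 1} :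
    (∑ j : Fin (k-1), q j • phiB k (j:ℕ) (w (j:ℕ))) ⟨0, h0⟩ =
      ∑ j : Fin (k-1), q j * pvx (w (j:ℕ)) := by
  rw [Finset.sum_apply]
  simp only [Pi.smul_apply, phiB_0, smul_eq_mul]

lemma sum_apply_1 {k : ℕ} (q : Fin (k-1) → ℝ) (w : ℕ → ℕ) {h1 : 1 < k + 1} :
    (∑ j : Fin (k-1), q j • phiB k (j:ℕ) (w (j:ℕ))) ⟨1, h1⟩ =
      ∑ j : Fin (k-1), q j * pvy (w (j:ℕ)) := by
  rw [Finset.sum_apply]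
  simp only [Pi.smul_apply, phiB_1, smul_eq_mul]

lemma red_dir {k t : ℕ} {j ia ib : ℕ} (hia : ia < t) (hib : ib < t) (hne : ia ≠ ib) :
    ∃ r : ℕ, r < t ∧ phiR k r ∈ span ℝ ({phiB k j ia, phiB k j ib} : Set (Fin (k+1) → ℝ)) := by
  have hmem1 : phiB k j ia ∈ span ℝ ({phiB k j ia, phiB k j ib} : Set (Fin (k+1) → ℝ)) :=
    subset_span (by simp)
  have hmem2 : phiB k j ib ∈ span ℝ ({phiB k j ia, phiB k j ib} : Set (Fin (k+1) → ℝ)) :=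
    subset_span (by simp)
  by_cases hb0 : ib = 0
  · refine ⟨ia, hia, ?_⟩
    have heq : phiR k ia = phiB k j ia - phiB k j ib := by
      subst hb0
      funext c
      obtain ⟨cv, hcv⟩ := c
      have hia0 : ia ≠ 0 := hne
      simp only [phiR, phiB, dvx, dvy, pvx, pvy, Pi.sub_apply, hia0, reduceIte]
      split_ifs <;> simp_all
    rw [heq]; exact sub_mem hmem1 hmem2
  · by_cases ha0 : ia = 0
    · refine ⟨ib, hib, ?_⟩
      have heq : phiR k ib = phiB k j ib - phiB k j ia := by
        subst ha0
        funext c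
        obtain ⟨cv, hcv⟩ := c
        simp only [phiR, phiB, dvx, dvy, pvx, pvy, Pi.sub_apply, hb0, reduceIte]
        split_ifs <;> simp_all
      rw [heq]; exact sub_mem hmem2 hmem1
    · refine ⟨0, by omega, ?_⟩
      have hcast : ((ia:ℝ) - ib) ≠ 0 := by
        intro h
        exact hne (Nat.cast_inj.mp (by linarith : (ia:ℝ) = ib))
      have heq : phiB k j ia - phiB k j ib = ((ia:ℝ) - ib) • phiR k 0 := by
        funext c
        obtain ⟨cv, hcv⟩ := c
        simp only [phiR, phiB, dvx, dvy, pvx, pvy, Pi.sub_apply, Pi.smul_apply, smul_eq_mul,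
          ha0, hb0, reduceIte]
        split_ifs <;> simp_all
      have : phiR k 0 = ((ia:ℝ) - ib)⁻¹ • (phiB k j ia - phiB k j ib) := by
        rw [heq, smul_smul, inv_mul_cancel₀ hcast, one_smul]
      rw [this]
      exact smul_mem _ _ (sub_mem hmem1 hmem2)



/-- `b_k(t) ≥ (k-1)t` for `k ≥ 3` and `t ≥ 3`. -/
theorem stmt16 (k t : ℕ) (hk : 3 ≤ k) (ht : 3 ≤ t) :
    ∃ (M : Matroid ℕ) (R B : Set ℕ), M.Finite ∧ SimpleM M ∧ RealRep M ∧
      rk M = k + 1 ∧ R ∪ B = M.E ∧ Disjoint R B ∧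
      R.ncard = t ∧ B.ncard = (k - 1) * t ∧ 2 ≤ rkS M B ∧
      (∀ H, Hyp M H → (H ∩ R).Nonempty) ∧
      (∀ L, (M.restrict B).IsFlat L → rkS (M.restrict B) L = 2 →
        ∃ F, M.IsFlat F ∧ rkS M F = k - 1 ∧ SkewSets M F L ∧ F ∩ R = ∅) := by
  classical
  have htpos : 0 < t := by omega
  set E : Set ℕ := ↑(Finset.range (t + (k-1)*t)) with hE
  have hfinE : E.Finite := (Finset.range _).finite_toSet
  set M : Matroid ℕ := matroidOfFun (phi k t) E hfinE with hM
  have hME : M.E = E := rfl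
  have hInd : ∀ I, M.Indep I ↔ I ⊆ E ∧ FamInd (phi k t) I := fun I =>
    matroidOfFun_indep_iff _ _ _
  have hmemE : ∀ n, n ∈ E ↔ n < t + (k-1)*t := by intro n; simp [hE]
  set R : Set ℕ := ↑(Finset.range t) with hR
  set B : Set ℕ := ↑(Finset.Ico t (t + (k-1)*t)) with hB
  have hmemR : ∀ n, n ∈ R ↔ n < t := by intro n; simp [hR]
  have hmemB : ∀ n, n ∈ B ↔ t ≤ n ∧ n < t + (k-1)*t := by intro n; simp [hB]
  have hBE : B ⊆ E := fun n hn => (hmemE n).2 ((hmemB n).1 hn).2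
  have hkt : 2*t ≤ (k-1)*t := Nat.mul_le_mul_right t (by omega)
  -- blue point membership helper
  have hblueE : ∀ j i : ℕ, j < k - 1 → i < t → t + j*t + i ∈ E := by
    intro j i hj hi
    have h1 : j*t + t ≤ (k-1)*t := by
      calc j*t + t = (j+1)*t := by ring
      _ ≤ (k-1)*t := Nat.mul_le_mul_right t (by omega)
    exact (hmemE _).2 (by omega)
  -- span of ground set is everything
  have hspanE : span ℝ (phi k t '' E) = ⊤ := by
    rw [eq_top_iff, ← (Pi.basisFun ℝ (Fin (k+1))).span_eq, span_le]
    rintro _ ⟨c, rfl⟩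
    rw [Pi.basisFun_apply]
    have hm0 : phi k t 0 ∈ span ℝ (phi k t '' E) :=
      subset_span (mem_image_of_mem _ ((hmemE 0).2 (by omega)))
    have hm1 : phi k t 1 ∈ span ℝ (phi k t '' E) :=
      subset_span (mem_image_of_mem _ ((hmemE 1).2 (by omega)))
    have hp0 : phi k t 0 = phiR k 0 := phi_red (by omega)
    have hp1 : phi k t 1 = phiR k 1 := phi_red (by omega)
    obtain ⟨cv, hcv⟩ := c
    by_cases hc0 : cv = 0
    · subst hc0
      rw [single0_eq, ← hp0]; exact hm0
    · by_cases hc1 : cv = 1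
      · subst hc1
        rw [single1_eq, ← hp0, ← hp1]; exact sub_mem hm0 hm1
      · have hj : cv - 2 < k - 1 := by omega
        have hfe : (⟨cv, hcv⟩ : Fin (k+1)) = ⟨(cv-2) + 2, by omega⟩ :=
          Fin.ext (show cv = (cv-2) + 2 by omega)
        rw [hfe, singlez_eq]
        have hmb : phi k t (t + (cv-2)*t + 0) ∈ span ℝ (phi k t '' E) :=
          subset_span (mem_image_of_mem _ (hblueE _ 0 hj (by omega)))
        rw [phi_blue (by omega) htpos] at hmb
        rw [← hp0, ← hp1]
        exact sub_mem hmb (sub_mem hm0 hm1)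
  have hrk : rk M = k + 1 := by
    rw [rk, rkS_eq hME hfinE hInd, hME, inter_self, hspanE, finrank_top,
      Module.finrank_pi, Fintype.card_fin]
  -- simplicity
  have hsimple : SimpleM M := by
    intro X hXE hX2
    have hXE' : X ⊆ E := by rwa [hME] at hXE
    have hXfin : X.Finite := hfinE.subset hXE'
    rw [hInd]
    refine ⟨hXE', ?_⟩
    rcases Nat.lt_or_ge X.ncard 1 with h | h
    · have hX0 : X = ∅ := (Set.ncard_eq_zero hXfin).mp (by omega)
      rw [hX0]; exact famInd_empty _
    rcases Nat.lt_or_ge X.ncard 2 with h2 | h2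
    · obtain ⟨a, rfl⟩ := Set.ncard_eq_one.mp (show X.ncard = 1 by omega)
      exact famInd_singleton (phi_ne_zero hk ht ((hmemE a).1 (hXE' (mem_singleton a))))
    · have h2' : X.ncard = 2 := by omega
      obtain ⟨a, b, hab, rfl⟩ := Set.ncard_eq_two.mp h2'
      have haE := (hmemE a).1 (hXE' (by simp))
      have hbE := (hmemE b).1 (hXE' (by simp))
      exact famInd_pair hk ht haE hbE hab
  -- real representability
  have hrep : RealRep M := by
    refine ⟨k+1, phi k t, fun I hIE => ?_⟩
    rw [hInd]
    exact ⟨fun h => h.2, fun h => ⟨by rwa [hME] at hIE, h⟩⟩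
  -- union, disjoint, cards
  have hunion : R ∪ B = M.E := by
    have hfs : Finset.range t ∪ Finset.Ico t (t + (k-1)*t) = Finset.range (t + (k-1)*t) := by
      rw [Finset.range_eq_Ico, Finset.range_eq_Ico]
      exact Finset.Ico_union_Ico_eq_Ico (by omega) (by omega)
    rw [hME, hR, hB, hE, ← Finset.coe_union, hfs]
  have hdisj : Disjoint R B := by
    rw [Set.disjoint_left]
    intro n hnR hnB
    have := (hmemR n).1 hnR
    have := (hmemB n).1 hnB
    omega
  have hcardR : R.ncard = t := by rw [hR, Set.ncard_coe_finset, Finset.card_range]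
  have hcardB : B.ncard = (k-1)*t := by
    rw [hB, Set.ncard_coe_finset, Nat.card_Ico]; omega
  -- rank of B at least 2
  have hrkB : 2 ≤ rkS M B := by
    rw [rkS_eq hME hfinE hInd, inter_eq_left.mpr hBE]
    have hpair : FamInd (phi k t) {t, t+1} :=
      famInd_pair hk ht (by omega) (by omega) (by omega)
    have hsub : ({t, t+1} : Set ℕ) ⊆ B := by
      intro n hn
      rw [hmemB]
      rcases hn with rfl | hn
      · omega
      · rw [mem_singleton_iff] at hn; omega
    have hfin2 : ({t, t+1} : Set ℕ).Finite := toFinite _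
    have hcard2 : ({t, t+1} : Set ℕ).ncard = 2 := Set.ncard_pair (by omega)
    calc 2 = Module.finrank ℝ (span ℝ (phi k t '' {t, t+1})) := by
          rw [← hpair.ncard_eq hfin2, hcard2]
    _ ≤ _ := Submodule.finrank_mono (span_mono (image_mono hsub))
  -- hyperplanes meet R
  have hhyp : ∀ H, Hyp M H → (H ∩ R).Nonempty := by
    intro H hH
    obtain ⟨hflat, hrkH⟩ := hH
    rw [hrk] at hrkH
    by_contra hempty
    rw [Set.not_nonempty_iff_eq_empty] at hempty
    have hHE : H ⊆ E := by rw [← hME]; exact hflat.subset_ground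
    have hHB : ∀ x ∈ H, t ≤ x := by
      intro x hx
      by_contra hlt
      have : x ∈ H ∩ R := ⟨hx, (hmemR x).2 (by omega)⟩
      rw [hempty] at this; exact this
    obtain ⟨I, hIind, hIX, hIcard, hIspan⟩ := exists_nice_basis hME hfinE hInd H
    have hHint : H ∩ E = H := inter_eq_left.mpr hHE
    rw [hHint] at hIX hIcard hIspan
    have hrkH' : rkS M H = Module.finrank ℝ (span ℝ (phi k t '' H)) := by
      rw [rkS_eq hME hfinE hInd, hHint]
    have hIcard' : I.ncard = k := by
      rw [hIcard, ← hrkH', hrkH]; omega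
    have hIfin : I.Finite := hfinE.subset (hIX.trans hHE)
    have hIcF : hIfin.toFinset.card = k := by
      rw [← Set.ncard_eq_toFinset_card _ hIfin, hIcard']
    obtain ⟨x, hxI, y, hyI, hxy, hjeq⟩ :=
      Finset.exists_ne_map_eq_of_card_lt_of_maps_to (t := Finset.range (k-1))
        (s := hIfin.toFinset)
        (by rw [hIcF, Finset.card_range]; omega)
        (f := fun n => (n - t)/t)
        (by
          intro a haf
          rw [Finset.mem_coe, Set.Finite.mem_toFinset] at haf
          have haE := (hmemE a).1 (hHE (hIX haf))
          have hat := hHB a (hIX haf)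
          exact Finset.mem_range.2 (blue_lt htpos hat haE).1)
    rw [Set.Finite.mem_toFinset] at hxI hyI
    have hxH := hIX hxI
    have hyH := hIX hyI
    have hxE := (hmemE x).1 (hHE hxH)
    have hyE := (hmemE y).1 (hHE hyH)
    have hxt := hHB x hxH
    have hyt := hHB y hyH
    obtain ⟨hjx, hix⟩ := blue_lt htpos hxt hxE
    obtain ⟨hjy, hiy⟩ := blue_lt htpos hyt hyE
    have hiane : (x-t)%t ≠ (y-t)%t := by
      intro h
      apply hxy
      rw [← blue_encode_decode htpos hxt, ← blue_encode_decode htpos hyt, hjeq, h]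
    obtain ⟨r, hrt, hrsp⟩ := red_dir (k := k) (j := (x-t)/t) hix hiy hiane
    have hphix : phi k t x = phiB k ((x-t)/t) ((x-t)%t) := phi_blue' (by omega)
    have hphiy : phi k t y = phiB k ((y-t)/t) ((y-t)%t) := phi_blue' (by omega)
    have hpairsub : ({phiB k ((x-t)/t) ((x-t)%t), phiB k ((x-t)/t) ((y-t)%t)} :
        Set (Fin (k+1) → ℝ)) ⊆ phi k t '' H := by
      intro v hv
      rcases hv with rfl | hv
      · exact ⟨x, hxH, hphix⟩
      · rw [mem_singleton_iff] at hv
        subst hv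
        exact ⟨y, hyH, by rw [hphiy, hjeq]⟩
        
    have hrsp' : phi k t r ∈ span ℝ (phi k t '' H) := by
      rw [phi_red hrt]
      have hle : span ℝ ({phiB k ((x-t)/t) ((x-t)%t), phiB k ((x-t)/t) ((y-t)%t)} :
          Set (Fin (k+1) → ℝ)) ≤ span ℝ (phi k t '' H) :=
        span_le.2 (fun v hv => subset_span (hpairsub hv))
      exact hle hrsp
    have hrH : r ∈ H := mem_flat_of_span hME hfinE hInd hflat ((hmemE r).2 (by omega)) hrsp'
    have : r ∈ H ∩ R := ⟨hrH, (hmemR r).2 hrt⟩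
    rw [hempty] at this; exact this
  -- lines of M|B have skew flats avoiding R
  have hline : ∀ L, (M.restrict B).IsFlat L → rkS (M.restrict B) L = 2 →
      ∃ F, M.IsFlat F ∧ rkS M F = k - 1 ∧ SkewSets M F L ∧ F ∩ R = ∅ := by
    intro L hLflat hLrk
    have hfinB : B.Finite := hfinE.subset hBE
    have hME' : (M.restrict B).E = B := Matroid.restrict_ground_eq
    have hInd' : ∀ I, (M.restrict B).Indep I ↔ I ⊆ B ∧ FamInd (phi k t) I := by
      intro I
      rw [Matroid.restrict_indep_iff, hInd]
      constructor
      · rintro ⟨⟨-, hf⟩, hIB⟩; exact ⟨hIB, hf⟩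
      · rintro ⟨hIB, hf⟩; exact ⟨⟨hIB.trans hBE, hf⟩, hIB⟩
    have hLB : L ⊆ B := by rw [← hME']; exact hLflat.subset_ground
    obtain ⟨I, hIind', hIX, hIcard, hIspan⟩ := exists_nice_basis hME' hfinB hInd' L
    have hLint : L ∩ B = L := inter_eq_left.mpr hLB
    rw [hLint] at hIX hIcard hIspan
    have hrkL2 : rkS (M.restrict B) L = Module.finrank ℝ (span ℝ (phi k t '' L)) := by
      rw [rkS_eq hME' hfinB hInd', hLint]
    have hIcard2 : I.ncard = 2 := by rw [hIcard, ← hrkL2, hLrk]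
    obtain ⟨x, y, hxy, hIxy⟩ := Set.ncard_eq_two.mp hIcard2
    have hxL : x ∈ L := hIX (by rw [hIxy]; exact mem_insert _ _)
    have hyL : y ∈ L := hIX (by rw [hIxy]; exact mem_insert_of_mem _ rfl)
    have hxB := (hmemB x).1 (hLB hxL)
    have hyB := (hmemB y).1 (hLB hyL)
    obtain ⟨hjx, hix⟩ := blue_lt htpos hxB.1 hxB.2
    obtain ⟨hjy, hiy⟩ := blue_lt htpos hyB.1 hyB.2
    have hphix : phi k t x = phiB k ((x-t)/t) ((x-t)%t) := phi_blue' (by omega)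
    have hphiy : phi k t y = phiB k ((y-t)/t) ((y-t)%t) := phi_blue' (by omega)
    have hsameimp : ((x-t)/t = (y-t)/t) → (x-t)%t ≠ (y-t)%t := by
      intro hjj hii
      apply hxy
      rw [← blue_encode_decode htpos hxB.1, ← blue_encode_decode htpos hyB.1, hjj, hii]
    obtain ⟨sx, sy, hsx, hsy, hsxy, hkey⟩ :=
      planar_choice ht hix hiy ((x-t)/t = (y-t)/t) hsameimp
    set jx := (x-t)/t with hjxd
    set jy := (y-t)/t with hjyd
    set ix := (x-t)%t with hixd
    set iy := (y-t)%t with hiyd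
    set τ : ℕ → ℕ := fun j => if j = jx then sx else if j = jy then sy else 0 with hτ
    have hτx : τ jx = sx := by simp [hτ]
    have hτy : τ jy = sy := by
      by_cases h : jy = jx
      · simp [hτ, h, hsxy h.symm]
      · simp [hτ, h]
    have hτlt : ∀ j, τ j < t := by
      intro j
      rw [hτ]
      dsimp only
      split_ifs <;> omega
    set g : Fin (k-1) → (Fin (k+1) → ℝ) := fun j => phiB k (j:ℕ) (τ (j:ℕ)) with hg
    have hgdef : ∀ j : Fin (k-1), g j = phiB k (j:ℕ) (τ (j:ℕ)) := fun j => rfl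
    set W := span ℝ (Set.range g) with hW
    set F : Set ℕ := {e ∈ E | phi k t e ∈ W} with hF
    have hFflat : M.IsFlat F := flat_of_subspace hME hfinE hInd W
    have hgind : LinearIndependent ℝ g := by
      rw [Fintype.linearIndependent_iff]
      intro q hq j
      have hq' : (∑ j : Fin (k-1), q j • phiB k (j:ℕ) (τ (j:ℕ))) = 0 := by
        rw [← hq]
      have := congrFun hq' ⟨(j:ℕ)+2, by omega⟩
      rw [sum_apply_z q τ j.2] at this
      simpa using this
    have hgmemF : ∀ j : Fin (k-1), g j ∈ phi k t '' F := by
      intro j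
      refine ⟨t + (j:ℕ)*t + τ (j:ℕ), ⟨hblueE _ _ j.2 (hτlt _), ?_⟩, ?_⟩
      · rw [phi_blue (hτlt _) htpos]
        exact subset_span ⟨j, rfl⟩
      · rw [phi_blue (hτlt _) htpos]
    have hspanF : span ℝ (phi k t '' F) = W := by
      refine le_antisymm (span_le.2 ?_) ?_
      · rintro _ ⟨e, he, rfl⟩; exact he.2
      · rw [hW]
        refine span_le.2 ?_
        rintro _ ⟨j, rfl⟩
        exact subset_span (hgmemF j)
    have hFE : F ⊆ E := sep_subset _ _
    have hrkF : rkS M F = k - 1 := by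
      rw [rkS_eq hME hfinE hInd, inter_eq_left.mpr hFE, hspanF, hW,
        finrank_span_eq_card hgind, Fintype.card_fin]
    have hFR : F ∩ R = ∅ := by
      rw [eq_empty_iff_forall_notMem]
      rintro e ⟨⟨heE, heW⟩, heR⟩
      have het : e < t := (hmemR e).1 heR
      rw [phi_red het] at heW
      obtain ⟨q, hq⟩ := (mem_span_range_iff_exists_fun ℝ).1 heW
      have hq' : (∑ j : Fin (k-1), q j • phiB k (j:ℕ) (τ (j:ℕ))) = phiR k e := by
        rw [← hq]
      have hq0 : ∀ j : Fin (k-1), q j = 0 := by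
        intro j
        have := congrFun hq' ⟨(j:ℕ)+2, by omega⟩
        rw [sum_apply_z q τ j.2, phiR_z] at this
        simpa using this
      have hzero : phiR k e = 0 := by
        rw [← hq']
        exact Finset.sum_eq_zero (fun j _ => by rw [hq0 j, zero_smul])
      exact phi_ne_zero hk ht (a := e) (by omega) (by rw [phi_red het]; exact hzero)
    -- the span of L
    have hIfam : FamInd (phi k t) I := ((hInd' I).1 hIind').2
    have hIfin : I.Finite := hfinB.subset (hIX.trans hLB)
    have hxyim : phi k t '' I = {phi k t x, phi k t y} := by rw [hIxy, Set.image_pair]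
    have hLspan : span ℝ (phi k t '' L) = span ℝ ({phi k t x, phi k t y} :
        Set (Fin (k+1) → ℝ)) := by rw [← hIspan, hxyim]
    have hrkL : rkS M L = 2 := by
      rw [rkS_eq hME hfinE hInd, inter_eq_left.mpr (hLB.trans hBE), ← hIspan,
        ← hIfam.ncard_eq hIfin, hIcard2]
    have hWL2 : Module.finrank ℝ (span ℝ ({phi k t x, phi k t y} :
        Set (Fin (k+1) → ℝ))) = 2 := by
      rw [← hLspan, ← hIspan, ← hIfam.ncard_eq hIfin, hIcard2]
    -- disjointness of the two spans
    have hdisjW : Disjoint W (span ℝ ({phi k t x, phi k t y} : Set (Fin (k+1) → ℝ))) := by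
      rw [Submodule.disjoint_def]
      intro v hvW hvL
      obtain ⟨a, b, hab⟩ := Submodule.mem_span_pair.1 hvL
      obtain ⟨q, hq⟩ := (mem_span_range_iff_exists_fun ℝ).1 hvW
      have heq : (∑ j : Fin (k-1), q j • phiB k (j:ℕ) (τ (j:ℕ))) =
          a • phiB k jx ix + b • phiB k jy iy := by
        rw [← hphix, ← hphiy, hab, ← hq]
      have hqj : ∀ j : Fin (k-1), q j =
          a * (if (j:ℕ) = jx then 1 else 0) + b * (if (j:ℕ) = jy then 1 else 0) := by
        intro j
        have hcf := congrFun heq ⟨(j:ℕ)+2, by omega⟩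
        rw [sum_apply_z q τ j.2] at hcf
        rw [Pi.add_apply, Pi.smul_apply, Pi.smul_apply, phiB_z, phiB_z, smul_eq_mul,
          smul_eq_mul] at hcf
        simpa using hcf
      have hsum : ∀ pv : ℕ → ℝ, (∑ j : Fin (k-1), q j * pv (τ (j:ℕ))) =
          a * pv sx + b * pv sy := by
        intro pv
        have hterm : ∀ j : Fin (k-1), q j * pv (τ (j:ℕ)) =
            (if j = (⟨jx, hjx⟩ : Fin (k-1)) then a * pv sx else 0) +
            (if j = (⟨jy, hjy⟩ : Fin (k-1)) then b * pv sy else 0) := by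
          intro j
          rw [hqj j]
          by_cases h1 : (j:ℕ) = jx <;> by_cases h2 : (j:ℕ) = jy
          · have hjxy : jx = jy := by omega
            have hss : sx = sy := hsxy hjxy
            rw [if_pos h1, if_pos h2, if_pos (Fin.ext h1), if_pos (Fin.ext h2),
              show τ (j:ℕ) = sx by rw [h1, hτx], hss]
            ring
          · rw [if_pos h1, if_neg h2, if_pos (Fin.ext h1),
              if_neg (fun hh => h2 (congrArg Fin.val hh)),
              show τ (j:ℕ) = sx by rw [h1, hτx]]
            ring
          · rw [if_neg h1, if_pos h2, if_neg (fun hh => h1 (congrArg Fin.val hh)),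
              if_pos (Fin.ext h2),
              show τ (j:ℕ) = sy by rw [h2, hτy]]
            ring
          · rw [if_neg h1, if_neg h2, if_neg (fun hh => h1 (congrArg Fin.val hh)),
              if_neg (fun hh => h2 (congrArg Fin.val hh))]
            ring
        rw [Finset.sum_congr rfl (fun j _ => hterm j), Finset.sum_add_distrib,
          Finset.sum_ite_eq' _ _ (fun _ => a * pv sx),
          Finset.sum_ite_eq' _ _ (fun _ => b * pv sy)]
        simp
      have h0 := congrFun heq ⟨0, by omega⟩
      rw [sum_apply_0 q τ, Pi.add_apply, Pi.smul_apply, Pi.smul_apply, phiB_0, phiB_0,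
        smul_eq_mul, smul_eq_mul, hsum] at h0
      have h1 := congrFun heq ⟨1, by omega⟩
      rw [sum_apply_1 q τ, Pi.add_apply, Pi.smul_apply, Pi.smul_apply, phiB_1, phiB_1,
        smul_eq_mul, smul_eq_mul, hsum] at h1
      obtain ⟨ha0, hb0⟩ := hkey a b h0.symm h1.symm
      rw [← hab, ha0, hb0, zero_smul, zero_smul, add_zero]
    -- skewness
    have hskew : SkewSets M F L := by
      rw [SkewSets, hrkF, hrkL, rkS_eq hME hfinE hInd,
        inter_eq_left.mpr (union_subset hFE (hLB.trans hBE)), image_union, span_union,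
        hspanF, hLspan]
      have hsup := Submodule.finrank_sup_add_finrank_inf_eq W
        (span ℝ ({phi k t x, phi k t y} : Set (Fin (k+1) → ℝ)))
      rw [hdisjW.eq_bot, finrank_bot] at hsup
      have hWr : Module.finrank ℝ W = k - 1 := by
        rw [hW, finrank_span_eq_card hgind, Fintype.card_fin]
      omega
    exact ⟨F, hFflat, hrkF, hskew, hFR⟩
  exact ⟨M, R, B, ⟨hfinE⟩, hsimple, hrep, hrk, hunion, hdisj, hcardR, hcardB, hrkB,
    hhyp, hline⟩


end MatroidPaper
end
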